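/- Let {C_n}_{n ≥ 1} be a decreasing sequence (C_{n+1} ⊆ C_n) of open convex subsets of ℝⁿ such that the intersection ⋂_n C_n contains a nonempty open set. Then ⋂_n cl(C_n) = cl(⋂_n C_n). -/

import Mathlib

/-- For a decreasing sequence of open convex subsets of `ℝⁿ` whose intersection contains a
nonempty open set, the intersection of the closures equals the closure of the intersection. -/
theorem iInter_closure_eq_closure_iInter {n : ℕ}
    (C : ℕ → Set (EuclideanSpace ℝ (Fin n)))
    (hdec : ∀ k : ℕ, C (k + 1) ⊆ C k)
    (hopen : ∀ k : ℕ, IsOpen (C k))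
    (hconv : ∀ k : ℕ, Convex ℝ (C k))
    (hU : ∃ U : Set (EuclideanSpace ℝ (Fin n)), IsOpen U ∧ U.Nonempty ∧ U ⊆ ⋂ k : ℕ, C k) :
    ⋂ k : ℕ, closure (C k) = closure (⋂ k : ℕ, C k) := by
  refine le_antisymm ?_ (closure_minimal (Set.iInter_mono fun k => subset_closure)
    (isClosed_iInter fun k => isClosed_closure))
  intro x hx
  obtain ⟨U, hUo, ⟨u, huU⟩, hUsub⟩ := hU
  have hu : ∀ k, u ∈ interior (C k) := fun k => by
    rw [(hopen k).interior_eq]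
    exact Set.mem_iInter.mp (hUsub huU) k
  have hx' : ∀ k, x ∈ closure (C k) := fun k => Set.mem_iInter.mp hx k
  have hseg : ∀ k, openSegment ℝ u x ⊆ C k := fun k => by
    have := (hconv k).openSegment_interior_closure_subset_interior (hu k) (hx' k)
    rwa [(hopen k).interior_eq] at this
  set t : ℕ → ℝ := fun m => 1 / (m + 2) with ht
  set p : ℕ → EuclideanSpace ℝ (Fin n) := fun m => t m • u + (1 - t m) • x with hp
  have htpos : ∀ m, 0 < t m := fun m => by positivity
  have htlt : ∀ m, t m < 1 := fun m => by
    rw [ht]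
    rw [div_lt_one (by positivity)]
    have : (0:ℝ) ≤ (m:ℝ) := Nat.cast_nonneg m
    linarith
  have hpmem : ∀ m, p m ∈ ⋂ k : ℕ, C k := by
    intro m
    refine Set.mem_iInter.mpr fun k => hseg k ?_
    exact ⟨t m, 1 - t m, htpos m, by linarith [htlt m], by ring, rfl⟩
  have ht0 : Filter.Tendsto t Filter.atTop (nhds 0) := by
    rw [ht]
    have h : Filter.Tendsto (fun m : ℕ => (m : ℝ) + 2) Filter.atTop Filter.atTop :=
      Filter.tendsto_atTop_add_const_right _ 2 tendsto_natCast_atTop_atTop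
    simpa [one_div, Pi.inv_def] using h.inv_tendsto_atTop
  have hptend : Filter.Tendsto p Filter.atTop (nhds x) := by
    have : Filter.Tendsto p Filter.atTop (nhds ((0:ℝ) • u + (1 - 0:ℝ) • x)) :=
      (ht0.smul_const u).add ((tendsto_const_nhds.sub ht0).smul_const x)
    simpa using this
  exact mem_closure_of_tendsto hptend (Filter.Eventually.of_forall hpmem)
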